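/- For all positive integers m and n, (2/π)·∫₀^π sin(mx) · (∑_{k=1}^∞ sin(k n x)/k) dx equals n/m if n divides m, and equals 0 otherwise. (Here the inner series converges for all x ∈ (0, π) outside the finitely many points where nx is a multiple of 2π, and the integrand is integrable on [0, π].) -/

import Mathlib

open Filter Real Topology Finset intervalIntegral

noncomputable def zdS (N : ℕ) (θ : ℝ) : ℝ :=
  ∑ k ∈ Finset.range N, Real.sin ((k + 1) * θ) / (k + 1)

noncomputable def zdD (N : ℕ) (θ : ℝ) : ℝ :=
  ∑ k ∈ Finset.range N, Real.sin ((k + 1) * θ)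

lemma zdD_closed (N : ℕ) (θ : ℝ) :
    2 * Real.sin (θ / 2) * zdD N θ
      = Real.cos (θ / 2) - Real.cos ((N + 1 / 2) * θ) := by
  induction N with
  | zero =>
    simp only [zdD, Finset.range_zero, Finset.sum_empty, mul_zero, Nat.cast_zero, zero_add]
    rw [show ((1:ℝ)/2) * θ = θ/2 by ring, sub_self]
  | succ N ih =>
    have e1 : (((N : ℝ) + 1/2) * θ + ((N + 1 : ℝ) + 1/2) * θ) / 2 = ((N : ℝ) + 1) * θ := by ring
    have e2 : (((N : ℝ) + 1/2) * θ - ((N + 1 : ℝ) + 1/2) * θ) / 2 = -(θ / 2) := by ring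
    have h := Real.cos_sub_cos (((N : ℝ) + 1/2) * θ) (((N + 1 : ℝ) + 1/2) * θ)
    rw [e1, e2, Real.sin_neg] at h
    have hD : zdD (N + 1) θ = zdD N θ + Real.sin (((N : ℝ) + 1) * θ) := by
      rw [zdD, Finset.sum_range_succ, ← zdD]
    rw [hD]
    push_cast
    push_cast at ih
    nlinarith [ih, h]

lemma zdD_bound {θ : ℝ} (hs : Real.sin (θ / 2) ≠ 0) (N : ℕ) :
    |zdD N θ| ≤ 1 / |Real.sin (θ / 2)| := by
  rw [le_div_iff₀ (abs_pos.mpr hs)]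
  have h1 : |zdD N θ| * |Real.sin (θ / 2)| * 2 = |2 * Real.sin (θ / 2) * zdD N θ| := by
    rw [abs_mul, abs_mul, abs_two]; ring
  have h2 : |Real.cos (θ / 2) - Real.cos ((N + 1 / 2) * θ)| ≤ 2 := by
    calc |Real.cos (θ / 2) - Real.cos ((N + 1 / 2) * θ)|
        ≤ |Real.cos (θ / 2)| + |Real.cos ((N + 1 / 2) * θ)| := abs_sub _ _
      _ ≤ 1 + 1 := add_le_add (Real.abs_cos_le_one _) (Real.abs_cos_le_one _)
      _ = 2 := by norm_num
  have h3 : |2 * Real.sin (θ / 2) * zdD N θ| = |Real.cos (θ / 2) - Real.cos ((N + 1 / 2) * θ)| := by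
    rw [zdD_closed]
  linarith

lemma zdTail {θ : ℝ} (hs : Real.sin (θ / 2) ≠ 0) (K : ℕ) : ∀ M : ℕ,
    |(∑ j ∈ Finset.range M, Real.sin (((K : ℝ) + j + 1) * θ) / ((K : ℝ) + j + 1))
        + zdD K θ / ((K : ℝ) + 1) - zdD (K + M) θ / ((K : ℝ) + M + 1)|
      ≤ (1 / ((K : ℝ) + 1) - 1 / ((K : ℝ) + M + 1)) * (1 / |Real.sin (θ / 2)|) := by
  intro M
  induction M with
  | zero => simp
  | succ M ih =>
    push_cast
    have hpos1 : (0:ℝ) < (K : ℝ) + M + 1 := by positivity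
    have hpos2 : (0:ℝ) < (K : ℝ) + M + 2 := by positivity
    have hD : zdD (K + (M + 1)) θ = zdD (K + M) θ + Real.sin (((K : ℝ) + M + 1) * θ) := by
      rw [show K + (M + 1) = (K + M) + 1 by ring, zdD, Finset.sum_range_succ, ← zdD]
      push_cast; ring_nf
    have hstep :
        (∑ j ∈ Finset.range (M + 1), Real.sin (((K : ℝ) + j + 1) * θ) / ((K : ℝ) + j + 1))
            + zdD K θ / ((K : ℝ) + 1) - zdD (K + (M + 1)) θ / ((K : ℝ) + (M + 1) + 1)
          = ((∑ j ∈ Finset.range M, Real.sin (((K : ℝ) + j + 1) * θ) / ((K : ℝ) + j + 1))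
              + zdD K θ / ((K : ℝ) + 1) - zdD (K + M) θ / ((K : ℝ) + M + 1))
            + zdD (K + M + 1) θ * (1 / ((K : ℝ) + M + 1) - 1 / ((K : ℝ) + M + 2)) := by
      rw [Finset.sum_range_succ, show K + (M + 1) = K + M + 1 from rfl]
      have hD' : zdD (K + M + 1) θ = zdD (K + M) θ + Real.sin (((K : ℝ) + M + 1) * θ) := hD
      rw [hD']
      push_cast
      rw [show (K : ℝ) + (M + 1) + 1 = K + M + 2 by ring]
      generalize (∑ j ∈ Finset.range M, Real.sin (((K : ℝ) + j + 1) * θ) / ((K : ℝ) + j + 1)) = S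
      field_simp
      ring
    have hDb := zdD_bound hs (K + M + 1)
    have hd : (0:ℝ) ≤ 1 / ((K : ℝ) + M + 1) - 1 / ((K : ℝ) + M + 2) := by
      have : 1 / ((K : ℝ) + M + 2) ≤ 1 / ((K : ℝ) + M + 1) := by
        apply one_div_le_one_div_of_le hpos1; linarith
      linarith
    calc |(∑ j ∈ Finset.range (M + 1), Real.sin (((K : ℝ) + j + 1) * θ) / ((K : ℝ) + j + 1))
            + zdD K θ / ((K : ℝ) + 1) - zdD (K + (M + 1)) θ / ((K : ℝ) + (M + 1) + 1)|
        ≤ |(∑ j ∈ Finset.range M, Real.sin (((K : ℝ) + j + 1) * θ) / ((K : ℝ) + j + 1))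
              + zdD K θ / ((K : ℝ) + 1) - zdD (K + M) θ / ((K : ℝ) + M + 1)|
            + |zdD (K + M + 1) θ| * (1 / ((K : ℝ) + M + 1) - 1 / ((K : ℝ) + M + 2)) := by
          rw [hstep]
          refine (abs_add_le _ _).trans ?_
          rw [abs_mul, abs_of_nonneg hd]
      _ ≤ (1 / ((K : ℝ) + 1) - 1 / ((K : ℝ) + M + 1)) * (1 / |Real.sin (θ / 2)|)
            + (1 / |Real.sin (θ / 2)|) * (1 / ((K : ℝ) + M + 1) - 1 / ((K : ℝ) + M + 2)) := by
          gcongr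
      _ = (1 / ((K : ℝ) + 1) - 1 / ((K : ℝ) + (M + 1) + 1)) * (1 / |Real.sin (θ / 2)|) := by
          push_cast; ring

lemma zdS_bound_pi {θ : ℝ} (h0 : 0 < θ) (hπ : θ ≤ π) (N : ℕ) :
    |zdS N θ| ≤ 1 + 3 * π := by
  have hpi := Real.pi_pos
  have hs : 0 < Real.sin (θ / 2) :=
    Real.sin_pos_of_pos_of_lt_pi (by linarith) (by linarith)
  have hsθ : θ / π ≤ Real.sin (θ / 2) := by
    have h := Real.mul_le_sin (x := θ / 2) (by linarith) (by linarith)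
    calc θ / π = 2 / π * (θ / 2) := by ring
      _ ≤ Real.sin (θ / 2) := h
  set K := ⌊1 / θ⌋₊ with hKdef
  have hK1 : (K : ℝ) ≤ 1 / θ := Nat.floor_le (by positivity)
  have hK2 : 1 / θ < (K : ℝ) + 1 := Nat.lt_floor_add_one _
  have hKθ : (K : ℝ) * θ ≤ 1 := by
    rw [le_div_iff₀ h0] at hK1; exact hK1
  have hKθ1 : 1 < ((K : ℝ) + 1) * θ := by
    rw [div_lt_iff₀ h0] at hK2; exact hK2
  have hsmall : ∀ M : ℕ, M ≤ K → |zdS M θ| ≤ 1 := by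
    intro M hM
    calc |zdS M θ| ≤ ∑ k ∈ Finset.range M, |Real.sin (((k : ℝ) + 1) * θ) / ((k : ℝ) + 1)| := by
          exact Finset.abs_sum_le_sum_abs _ _
      _ ≤ ∑ _k ∈ Finset.range M, θ := by
          apply Finset.sum_le_sum
          intro k _
          have hk1 : (0:ℝ) < (k : ℝ) + 1 := by positivity
          rw [abs_div, abs_of_pos hk1, div_le_iff₀ hk1]
          calc |Real.sin (((k : ℝ) + 1) * θ)| ≤ |((k : ℝ) + 1) * θ| := Real.abs_sin_le_abs
            _ = ((k : ℝ) + 1) * θ := abs_of_pos (by positivity)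
            _ = θ * ((k : ℝ) + 1) := by ring
      _ = (M : ℝ) * θ := by rw [Finset.sum_const, Finset.card_range]; simp [nsmul_eq_mul]
      _ ≤ (K : ℝ) * θ := by
          have : (M : ℝ) ≤ (K : ℝ) := by exact_mod_cast hM
          nlinarith
      _ ≤ 1 := hKθ
  by_cases hNK : N ≤ K
  · linarith [hsmall N hNK]
  · push_neg at hNK
    obtain ⟨M, rfl⟩ : ∃ M, N = K + M := ⟨N - K, by omega⟩
    have hsplit : zdS (K + M) θ
        = zdS K θ + ∑ j ∈ Finset.range M, Real.sin (((K : ℝ) + j + 1) * θ) / ((K : ℝ) + j + 1) := by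
      rw [zdS, Finset.sum_range_add, ← zdS]
      congr 1
      apply Finset.sum_congr rfl
      intro j _
      push_cast
      ring_nf
    have htail := zdTail hs.ne' K M
    have hD1 := zdD_bound hs.ne' K
    have hD2 := zdD_bound hs.ne' (K + M)
    have hposK : (0:ℝ) < (K : ℝ) + 1 := by positivity
    have hposKM : (0:ℝ) < (K : ℝ) + M + 1 := by positivity
    have habsS : |Real.sin (θ / 2)| = Real.sin (θ / 2) := abs_of_pos hs
    have hKM_le : 1 / ((K : ℝ) + M + 1) ≤ 1 / ((K : ℝ) + 1) := by
      apply one_div_le_one_div_of_le hposK; simp [Nat.cast_nonneg]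
    set s := Real.sin (θ / 2) with hsdef
    set A := (∑ j ∈ Finset.range M, Real.sin (((K : ℝ) + j + 1) * θ) / ((K : ℝ) + j + 1))
        + zdD K θ / ((K : ℝ) + 1) - zdD (K + M) θ / ((K : ℝ) + M + 1) with hA
    have hs1 : 1 / |s| = 1 / s := by rw [habsS]
    have hAb : |A| ≤ (1 / ((K : ℝ) + 1)) * (1 / s) := by
      refine htail.trans ?_
      rw [hs1]
      apply mul_le_mul_of_nonneg_right _ (by positivity)
      have : 0 ≤ 1 / ((K : ℝ) + M + 1) := by positivity
      linarith
    have hDb1 : |zdD K θ| / ((K : ℝ) + 1) ≤ (1 / ((K : ℝ) + 1)) * (1 / s) := by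
      rw [div_le_iff₀ hposK]
      calc |zdD K θ| ≤ 1 / |s| := hD1
        _ = (1 / ((K : ℝ) + 1)) * (1 / s) * ((K : ℝ) + 1) := by rw [hs1]; field_simp
    have hDb2 : |zdD (K + M) θ| / ((K : ℝ) + M + 1) ≤ (1 / ((K : ℝ) + 1)) * (1 / s) := by
      rw [div_le_iff₀ hposKM]
      calc |zdD (K + M) θ| ≤ 1 / |s| := hD2
        _ = 1 / s := hs1
        _ ≤ (1 / ((K : ℝ) + 1)) * (1 / s) * ((K : ℝ) + M + 1) := by
            calc (1:ℝ) / s = (1 / ((K : ℝ) + M + 1)) * (1 / s) * ((K : ℝ) + M + 1) := by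
                  field_simp
              _ ≤ _ := by gcongr
    have htail2 : |∑ j ∈ Finset.range M, Real.sin (((K : ℝ) + j + 1) * θ) / ((K : ℝ) + j + 1)|
        ≤ 3 * ((1 / ((K : ℝ) + 1)) * (1 / s)) := by
      calc |∑ j ∈ Finset.range M, Real.sin (((K : ℝ) + j + 1) * θ) / ((K : ℝ) + j + 1)|
          = |A + (zdD (K + M) θ / ((K : ℝ) + M + 1) - zdD K θ / ((K : ℝ) + 1))| := by
            congr 1; rw [hA]; ring
        _ ≤ |A| + |zdD (K + M) θ / ((K : ℝ) + M + 1) - zdD K θ / ((K : ℝ) + 1)| := abs_add_le _ _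
        _ ≤ |A| + (|zdD (K + M) θ / ((K : ℝ) + M + 1)| + |zdD K θ / ((K : ℝ) + 1)|) := by
            have := abs_sub (zdD (K + M) θ / ((K : ℝ) + M + 1)) (zdD K θ / ((K : ℝ) + 1))
            linarith
        _ = |A| + (|zdD (K + M) θ| / ((K : ℝ) + M + 1) + |zdD K θ| / ((K : ℝ) + 1)) := by
            rw [abs_div, abs_div, abs_of_pos hposKM, abs_of_pos hposK]
        _ ≤ 3 * ((1 / ((K : ℝ) + 1)) * (1 / s)) := by linarith
    have hfinal : 3 * ((1 / ((K : ℝ) + 1)) * (1 / s)) ≤ 3 * π := by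
      have hKs : 1 / π ≤ ((K : ℝ) + 1) * s := by
        calc 1 / π ≤ (((K : ℝ) + 1) * θ) / π := by
              rw [div_le_div_iff_of_pos_right hpi]
              linarith
          _ = ((K : ℝ) + 1) * (θ / π) := by ring
          _ ≤ ((K : ℝ) + 1) * s := by
              apply mul_le_mul_of_nonneg_left hsθ (by positivity)
      calc 3 * ((1 / ((K : ℝ) + 1)) * (1 / s)) = 3 / (((K : ℝ) + 1) * s) := by
            field_simp
        _ ≤ 3 / (1 / π) := by
            apply div_le_div_of_nonneg_left (by norm_num) (by positivity) hKs
        _ = 3 * π := by field_simp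
    calc |zdS (K + M) θ|
        ≤ |zdS K θ| + |∑ j ∈ Finset.range M, Real.sin (((K : ℝ) + j + 1) * θ) / ((K : ℝ) + j + 1)| := by
          rw [hsplit]; exact abs_add_le _ _
      _ ≤ 1 + 3 * π := by
          have := hsmall K le_rfl
          linarith

lemma zdS_bound (N : ℕ) (θ : ℝ) : |zdS N θ| ≤ 1 + 3 * π := by
  have hpi := Real.pi_pos
  have hIcc : ∀ t : ℝ, 0 ≤ t → t ≤ π → |zdS N t| ≤ 1 + 3 * π := by
    intro t ht0 htπ
    rcases eq_or_lt_of_le ht0 with h0 | h0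
    · have : zdS N t = 0 := by
        rw [zdS]
        apply Finset.sum_eq_zero
        intro k _
        rw [← h0, mul_zero, Real.sin_zero, zero_div]
      rw [this, abs_zero]; positivity
    · exact zdS_bound_pi h0 htπ N
  set j : ℤ := ⌊θ / (2 * π)⌋ with hj
  set t0 : ℝ := θ - j * (2 * π) with ht0def
  have h2π : (0:ℝ) < 2 * π := by positivity
  have ht00 : 0 ≤ t0 := by
    have h := Int.floor_le (θ / (2 * π))
    rw [ht0def, sub_nonneg, ← le_div_iff₀ h2π]
    exact h
  have ht02 : t0 < 2 * π := by
    have h := Int.lt_floor_add_one (θ / (2 * π))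
    have h' := (div_lt_iff₀ h2π).mp h
    rw [ht0def]
    push_cast at h' ⊢
    linarith
  have hs0 : ∀ k : ℕ, Real.sin (((k : ℝ) + 1) * t0) = Real.sin (((k : ℝ) + 1) * θ) := by
    intro k
    have he : ((k : ℝ) + 1) * t0 = ((k : ℝ) + 1) * θ - ((((k : ℤ) + 1) * j : ℤ) : ℝ) * (2 * π) := by
      rw [ht0def]; push_cast; ring
    rw [he, Real.sin_sub_int_mul_two_pi]
  have hzdS0 : zdS N t0 = zdS N θ := by
    rw [zdS, zdS]
    exact Finset.sum_congr rfl fun k _ => by rw [hs0 k]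
  by_cases hcase : t0 ≤ π
  · rw [← hzdS0]; exact hIcc t0 ht00 hcase
  · push_neg at hcase
    set t1 : ℝ := 2 * π - t0 with ht1def
    have ht10 : 0 ≤ t1 := by rw [ht1def]; linarith
    have ht1π : t1 ≤ π := by rw [ht1def]; linarith
    have hs1 : ∀ k : ℕ, Real.sin (((k : ℝ) + 1) * t0) = -Real.sin (((k : ℝ) + 1) * t1) := by
      intro k
      have he : ((k : ℝ) + 1) * t1 = (((k : ℤ) + 1 : ℤ) : ℝ) * (2 * π) - ((k : ℝ) + 1) * t0 := by
        rw [ht1def]; push_cast; ring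
      rw [he, Real.sin_int_mul_two_pi_sub, neg_neg]
    have hzdS1 : zdS N t0 = -zdS N t1 := by
      rw [zdS, zdS, ← Finset.sum_neg_distrib]
      exact Finset.sum_congr rfl fun k _ => by rw [hs1 k, neg_div]
    rw [← hzdS0, hzdS1, abs_neg]
    exact hIcc t1 ht10 ht1π

lemma zd_int_cos {c : ℤ} (hc : c ≠ 0) :
    ∫ x in (0:ℝ)..π, Real.cos ((c : ℝ) * x) = 0 := by
  have hc' : (c : ℝ) ≠ 0 := Int.cast_ne_zero.mpr hc
  rw [integral_comp_mul_left (fun y => Real.cos y) hc', integral_cos, mul_zero, Real.sin_zero,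
    sub_zero, Real.sin_int_mul_pi, smul_zero]

lemma zd_orth (a b : ℕ) (ha : 0 < a) (hb : 0 < b) :
    ∫ x in (0:ℝ)..π, Real.sin ((a : ℝ) * x) * Real.sin ((b : ℝ) * x)
      = if a = b then π / 2 else 0 := by
  have key : ∀ x : ℝ, Real.sin ((a : ℝ) * x) * Real.sin ((b : ℝ) * x)
      = (Real.cos (((a : ℝ) - b) * x) - Real.cos (((a : ℝ) + b) * x)) / 2 := by
    intro x
    have e1 : ((((a : ℝ) - b) * x) + (((a : ℝ) + b) * x)) / 2 = (a : ℝ) * x := by ring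
    have e2 : ((((a : ℝ) - b) * x) - (((a : ℝ) + b) * x)) / 2 = -((b : ℝ) * x) := by ring
    have h := Real.cos_sub_cos (((a : ℝ) - b) * x) (((a : ℝ) + b) * x)
    rw [e1, e2, Real.sin_neg] at h
    linarith
  simp_rw [key]
  rw [intervalIntegral.integral_div]
  have hint : ∀ c : ℝ, IntervalIntegrable (fun x => Real.cos (c * x)) MeasureTheory.volume 0 π :=
    fun c => (Real.continuous_cos.comp (continuous_const.mul continuous_id)).intervalIntegrable 0 π
  rw [intervalIntegral.integral_sub (hint _) (hint _)]
  have hab : ((a : ℝ) + b) = ((a + b : ℤ) : ℝ) := by push_cast; ring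
  have h2 : ∫ x in (0:ℝ)..π, Real.cos (((a : ℝ) + b) * x) = 0 := by
    rw [hab]; exact zd_int_cos (by omega)
  by_cases hcase : a = b
  · subst hcase
    simp only [sub_self, zero_mul, Real.cos_zero]
    rw [h2, intervalIntegral.integral_const]
    simp
  · have hab' : ((a : ℝ) - b) = ((a - b : ℤ) : ℝ) := by push_cast; ring
    have h1 : ∫ x in (0:ℝ)..π, Real.cos (((a : ℝ) - b) * x) = 0 := by
      rw [hab']
      apply zd_int_cos
      omega
    rw [h1, h2, if_neg hcase]
    norm_num


/-- For positive integers `m`, `n`, let `f` be the pointwise sum of the series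
`∑_{k=1}^∞ sin(k n x)/k` (which converges for every real `x`). Then the integrand
`sin(mx)·f(x)` is integrable on `[0, π]` and `(2/π)∫₀^π sin(mx) f(x) dx` equals `n/m`
if `n` divides `m`, and `0` otherwise. These are the matrix elements of `ζ(1 - i x̂ p̂)`
in the orthonormal sine basis `{√(2/π) sin(nx)}` of `L²(0, π)`. -/
theorem zeta_dilation_matrix_elements (m n : ℕ) (hm : 0 < m) (hn : 0 < n) (f : ℝ → ℝ)
    (hf : ∀ x : ℝ,
      Tendsto (fun N : ℕ => ∑ k ∈ Finset.range N, Real.sin ((k + 1) * n * x) / (k + 1))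
        atTop (nhds (f x))) :
    IntervalIntegrable (fun x => Real.sin (m * x) * f x) MeasureTheory.volume 0 Real.pi ∧
      (2 / Real.pi) * ∫ x in (0 : ℝ)..Real.pi, Real.sin (m * x) * f x =
        if n ∣ m then (n : ℝ) / m else 0 := by
  have hpi := Real.pi_pos
  set C : ℝ := 1 + 3 * π with hC
  have hC0 : 0 ≤ C := by positivity
  set P : ℕ → ℝ → ℝ := fun N x => ∑ k ∈ Finset.range N, Real.sin ((k + 1) * n * x) / (k + 1)
    with hP
  have hPz : ∀ N x, P N x = zdS N (n * x) := by
    intro N x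
    rw [hP, zdS]
    exact Finset.sum_congr rfl fun k _ => by rw [mul_assoc]
  have hPb : ∀ N x, |P N x| ≤ C := fun N x => by rw [hPz]; exact zdS_bound N (n * x)
  have hPcont : ∀ N, Continuous (P N) := by
    intro N
    apply continuous_finset_sum
    intro k _
    exact (Real.continuous_sin.comp (by continuity)).div_const _
  have hfb : ∀ x, |f x| ≤ C := by
    intro x
    exact le_of_tendsto (hf x).abs (Eventually.of_forall fun N => hPb N x)
  have hsinc : Continuous fun x : ℝ => Real.sin (m * x) :=
    Real.continuous_sin.comp (continuous_const.mul continuous_id)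
  -- integrability
  have hfm : MeasureTheory.AEStronglyMeasurable f
      (MeasureTheory.volume.restrict (Set.uIoc (0:ℝ) π)) :=
    aestronglyMeasurable_of_tendsto_ae atTop
      (fun N => ((hPcont N).aestronglyMeasurable)) (.of_forall fun x => hf x)
  have hInt : IntervalIntegrable (fun x => Real.sin (m * x) * f x)
      MeasureTheory.volume 0 π := by
    rw [intervalIntegrable_iff]
    apply MeasureTheory.Integrable.mono' (g := fun _ => C)
    · have huIoc : Set.uIoc (0:ℝ) π = Set.Ioc (0:ℝ) π := Set.uIoc_of_le hpi.le
      rw [MeasureTheory.integrable_const_iff]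
      right
      exact ⟨by rw [MeasureTheory.Measure.restrict_apply_univ, huIoc]; exact measure_Ioc_lt_top⟩
    · exact hsinc.aestronglyMeasurable.mul hfm
    · apply MeasureTheory.ae_of_all
      intro x
      rw [Real.norm_eq_abs, abs_mul]
      calc |Real.sin (m * x)| * |f x| ≤ 1 * C :=
            mul_le_mul (Real.abs_sin_le_one _) (hfb x) (abs_nonneg _) one_pos.le
        _ = C := one_mul C
  refine ⟨hInt, ?_⟩
  -- dominated convergence
  have hDCT : Tendsto (fun N => ∫ x in (0:ℝ)..π, Real.sin (m * x) * P N x) atTop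
      (𝓝 (∫ x in (0:ℝ)..π, Real.sin (m * x) * f x)) := by
    apply intervalIntegral.tendsto_integral_filter_of_dominated_convergence (fun _ => C)
    · exact Eventually.of_forall fun N => (hsinc.mul (hPcont N)).aestronglyMeasurable
    · refine Eventually.of_forall fun N => MeasureTheory.ae_of_all _ fun x _ => ?_
      rw [Real.norm_eq_abs, abs_mul]
      calc |Real.sin (m * x)| * |P N x| ≤ 1 * C :=
            mul_le_mul (Real.abs_sin_le_one _) (hPb N x) (abs_nonneg _) one_pos.le
        _ = C := one_mul C
    · exact intervalIntegrable_const
    · exact MeasureTheory.ae_of_all _ fun x _ => (hf x).const_mul _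
  -- compute the integrals of partial sums
  have hIk : ∀ k : ℕ, IntervalIntegrable
      (fun x => Real.sin (m * x) * Real.sin (((k:ℝ) + 1) * n * x) / ((k:ℝ) + 1))
      MeasureTheory.volume 0 π := by
    intro k
    apply Continuous.intervalIntegrable
    exact (hsinc.mul (Real.continuous_sin.comp (by continuity))).div_const _
  have horth : ∀ k : ℕ, (∫ x in (0:ℝ)..π, Real.sin (m * x) * Real.sin (((k:ℝ) + 1) * n * x))
      = if m = (k+1)*n then π/2 else 0 := by
    intro k
    have hcast : ∀ x : ℝ, Real.sin (((k:ℝ) + 1) * n * x)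
        = Real.sin ((((k+1)*n : ℕ) : ℝ) * x) := by
      intro x; push_cast; ring_nf
    simp_rw [hcast]
    exact zd_orth m ((k+1)*n) hm (by positivity)
  have hIeq : ∀ N, (∫ x in (0:ℝ)..π, Real.sin (m * x) * P N x)
      = ∑ k ∈ Finset.range N, (if m = (k+1)*n then π/2 else 0) / ((k:ℝ)+1) := by
    intro N
    have hrw : (fun x => Real.sin (m * x) * P N x)
        = fun x => ∑ k ∈ Finset.range N,
            Real.sin (m * x) * Real.sin (((k:ℝ) + 1) * n * x) / ((k:ℝ) + 1) := by
      funext x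
      rw [hP, Finset.mul_sum]
      exact Finset.sum_congr rfl fun k _ => by ring
    rw [hrw, intervalIntegral.integral_finset_sum (fun k _ => hIk k)]
    refine Finset.sum_congr rfl fun k _ => ?_
    rw [← horth k, ← intervalIntegral.integral_div]
  -- the eventual value
  set V : ℝ := if n ∣ m then π/2 * ((n:ℝ)/m) else 0 with hV
  have hval : ∀ N, m ≤ N →
      (∑ k ∈ Finset.range N, (if m = (k+1)*n then π/2 else 0) / ((k:ℝ)+1)) = V := by
    intro N hN
    by_cases hdvd : n ∣ m
    · obtain ⟨q, hq⟩ := hdvd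
      have hq0 : 0 < q := Nat.pos_of_ne_zero fun h => by rw [h, mul_zero] at hq; omega
      have hq1 : q - 1 + 1 = q := by omega
      rw [hV, if_pos ⟨q, hq⟩]
      rw [Finset.sum_eq_single_of_mem (q - 1)
        (Finset.mem_range.mpr (by have : q ≤ m := Nat.le_of_dvd hm ⟨n, by rw [hq, Nat.mul_comm]⟩; omega))]
      · rw [if_pos (by rw [hq1, Nat.mul_comm]; exact hq)]
        have h1 : ((q - 1 : ℕ) : ℝ) + 1 = (q : ℝ) := by exact_mod_cast hq1
        rw [h1, hq]
        have hnq : ((n : ℝ) ≠ 0) := Nat.cast_ne_zero.mpr hn.ne'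
        have hqq : ((q : ℝ) ≠ 0) := Nat.cast_ne_zero.mpr hq0.ne'
        push_cast
        field_simp
      · intro k hk hne
        rw [if_neg, zero_div]
        intro h
        apply hne
        have : q = k + 1 := Nat.eq_of_mul_eq_mul_left hn (by rw [← hq, h, Nat.mul_comm])
        omega
    · rw [hV, if_neg hdvd]
      apply Finset.sum_eq_zero
      intro k _
      rw [if_neg, zero_div]
      intro h
      exact hdvd ⟨k+1, by rw [h, Nat.mul_comm]⟩
  have hev : (fun _ : ℕ => V) =ᶠ[atTop] (fun N => ∫ x in (0:ℝ)..π, Real.sin (m * x) * P N x) := by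
    filter_upwards [eventually_ge_atTop m] with N hN
    rw [hIeq N, hval N hN]
  have hEq : (∫ x in (0:ℝ)..π, Real.sin (m * x) * f x) = V :=
    tendsto_nhds_unique hDCT (tendsto_const_nhds.congr' hev)
  rw [hEq, hV]
  by_cases hdvd : n ∣ m
  · rw [if_pos hdvd, if_pos hdvd]
    have hπ0 : (π : ℝ) ≠ 0 := hpi.ne'
    field_simp
  · rw [if_neg hdvd, if_neg hdvd, mul_zero]
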